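/- Let C be a shortest even hole of a graph G, let u and v be distinct vertices of C, let the uv-path P of G be a C-shallow worst C-shortcut, and let C1, C2 be the uv-paths of C with ‖C1‖ ≤ ‖C2‖. Then every shortest uv-path P_uv of G satisfies ‖P_uv‖ = ‖P‖ and G[P_uv ∪ C2] is a hole of G. -/

import Mathlib

open SimpleGraph

variable {V : Type*}

/-- The vertex set of a walk. -/
def suppSet {G : SimpleGraph V} {u v : V} (w : G.Walk u v) : Set V :=
  {x | x ∈ w.support}

/-- An induced cycle of `G`. -/
def IsInducedCycle (G : SimpleGraph V) {r : V} (w : G.Walk r r) : Prop :=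
  w.IsCycle ∧ ∀ a b : V, a ∈ w.support → b ∈ w.support → G.Adj a b → s(a, b) ∈ w.edges

/-- A hole of `G`: an induced cycle with at least 4 vertices. -/
def IsHole (G : SimpleGraph V) {r : V} (w : G.Walk r r) : Prop :=
  IsInducedCycle G w ∧ 4 ≤ w.length

/-- An even hole of `G`. -/
def IsEvenHole (G : SimpleGraph V) {r : V} (w : G.Walk r r) : Prop :=
  IsHole G w ∧ Even w.length

/-- A shortest even hole of `G`. -/
def IsShortestEvenHole (G : SimpleGraph V) {r : V} (w : G.Walk r r) : Prop :=
  IsEvenHole G w ∧ ∀ (y : V) (w' : G.Walk y y), IsEvenHole G w' → w.length ≤ w'.length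

/-- `P` is a path of `G` all of whose edges lie on the walk `c`
(used for "a `uv`-path of `C`"). -/
def IsPathOf (G : SimpleGraph V) {p q u v : V} (c : G.Walk p q) (P : G.Walk u v) : Prop :=
  P.IsPath ∧ ∀ e ∈ P.edges, e ∈ c.edges

/-- The distance `d_C(u,v)` between `u` and `v` within the cycle `c`. -/
noncomputable def cycleDist (G : SimpleGraph V) {r : V} (c : G.Walk r r) (u v : V) : ℕ :=
  sInf {n | ∃ P : G.Walk u v, IsPathOf G c P ∧ P.length = n}

/-- The induced subgraph `G[S]` is a hole of `G`. -/
def IsHoleOn (G : SimpleGraph V) (S : Set V) : Prop :=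
  ∃ (r : V) (w : G.Walk r r), IsHole G w ∧ suppSet w = S

/-- The induced subgraph `G[S]` is an even hole of `G`. -/
def IsEvenHoleOn (G : SimpleGraph V) (S : Set V) : Prop :=
  ∃ (r : V) (w : G.Walk r r), IsEvenHole G w ∧ suppSet w = S

/-- The induced subgraph `G[S]` is a shortest even hole of `G`. -/
def IsShortestEvenHoleOn (G : SimpleGraph V) (S : Set V) : Prop :=
  ∃ (r : V) (w : G.Walk r r), IsShortestEvenHole G w ∧ suppSet w = S

/-- `P` is `C`-good: the union of `P` and one of the two `uv`-paths of `C`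
is again a shortest even hole of `G`. -/
def CGood (G : SimpleGraph V) {r u v : V} (c : G.Walk r r) (P : G.Walk u v) : Prop :=
  ∃ Q : G.Walk u v, IsPathOf G c Q ∧ IsShortestEvenHoleOn G (suppSet P ∪ suppSet Q)

/-- The standing assumptions for `C`-shortcuts: `P` is a `uv`-path of `G` for distinct
nonadjacent vertices `u`, `v` of `C`. -/
def ShortcutSetup (G : SimpleGraph V) {r u v : V} (c : G.Walk r r) (P : G.Walk u v) : Prop :=
  P.IsPath ∧ u ≠ v ∧ ¬G.Adj u v ∧ u ∈ c.support ∧ v ∈ c.support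

/-- `P` is a `C`-shortcut: `2 ≤ ‖P‖ ≤ d_C(u,v)` and `‖P‖ < ‖C‖/4`. -/
def CShortcut (G : SimpleGraph V) {r u v : V} (c : G.Walk r r) (P : G.Walk u v) : Prop :=
  2 ≤ P.length ∧ P.length ≤ cycleDist G c u v ∧ 4 * P.length < c.length

/-- `C1` and `C2` are the two `uv`-paths of the cycle `c`. -/
def ArcPair (G : SimpleGraph V) {r u v : V} (c : G.Walk r r) (C1 C2 : G.Walk u v) : Prop :=
  IsPathOf G c C1 ∧ IsPathOf G c C2 ∧ C1.length + C2.length = c.length ∧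
    ∀ e ∈ c.edges, e ∈ C1.edges ∨ e ∈ C2.edges

/-- `P` is `C`-shallow: `‖P‖ ≥ d_C(u,v) − 1` and `G[P ∪ C2]` is a hole, where `C2` is the
longer of the two `uv`-paths of `C`. -/
def CShallow (G : SimpleGraph V) {r u v : V} (c : G.Walk r r) (P : G.Walk u v) : Prop :=
  cycleDist G c u v - 1 ≤ P.length ∧
    ∀ C1 C2 : G.Walk u v, ArcPair G c C1 C2 → C1.length ≤ C2.length →
      IsHoleOn G (suppSet P ∪ suppSet C2)

/-- `P` is a worst `C`-shortcut. -/
def WorstCShortcut (G : SimpleGraph V) {r u v : V} (c : G.Walk r r) (P : G.Walk u v) : Prop :=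
  ShortcutSetup G c P ∧ CShortcut G c P ∧ ¬CGood G c P ∧
    ∀ (u' v' : V) (P' : G.Walk u' v'),
      ShortcutSetup G c P' → CShortcut G c P' → ¬CGood G c P' →
        (P.length < P'.length ∨
          (P.length = P'.length ∧ cycleDist G c u' v' ≤ cycleDist G c u v))

/-- `C` is good in `G`: every `C`-shortcut is `C`-good. -/
def GoodHole (G : SimpleGraph V) {r : V} (c : G.Walk r r) : Prop :=
  ∀ (u v : V) (P : G.Walk u v), ShortcutSetup G c P → CShortcut G c P → CGood G c P

/-- `P` is a shortest `uv`-path of `G`. -/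
def IsShortestPath (G : SimpleGraph V) {u v : V} (P : G.Walk u v) : Prop :=
  P.IsPath ∧ ∀ Q : G.Walk u v, P.length ≤ Q.length

/-- The closed neighborhood `N_G[S]` of a vertex set `S`. -/
def closedNbhd (G : SimpleGraph V) (S : Set V) : Set V :=
  S ∪ {x | ∃ y ∈ S, G.Adj y x}

/-- The subgraph of `G` induced on `S` (kept on the same vertex type: edges of `G`
with both ends in `S`). -/
def restrictTo (G : SimpleGraph V) (S : Set V) : SimpleGraph V where
  Adj a b := G.Adj a b ∧ a ∈ S ∧ b ∈ S
  symm := ⟨fun a b h => ⟨h.1.symm, h.2.2, h.2.1⟩⟩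
  loopless := ⟨fun a h => G.irrefl h.1⟩

/-- The vertex set of `H(u,v,x,y) = G[(V(G) \ N_G[V(P_uv ∪ P_xy) \ {u,v}]) ∪ {u,v}]`. -/
def Hverts (G : SimpleGraph V) {u v a b : V} (Puv : G.Walk u v) (Pxy : G.Walk a b) : Set V :=
  (Set.univ \ closedNbhd G ((suppSet Puv ∪ suppSet Pxy) \ {u, v})) ∪ {u, v}

/-- The graph `H(u,v,x,y)`. -/
def Hgraph (G : SimpleGraph V) {u v a b : V} (Puv : G.Walk u v) (Pxy : G.Walk a b) :
    SimpleGraph V :=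
  restrictTo G (Hverts G Puv Pxy)

/-- `G` is shallow. -/
def ShallowGraph (G : SimpleGraph V) : Prop :=
  ∃ (r : V) (c : G.Walk r r), IsShortestEvenHole G c ∧
    ∀ (u v : V) (P : G.Walk u v), WorstCShortcut G c P → CShallow G c P

/-- `G` is anti-shallow. -/
def AntiShallowGraph (G : SimpleGraph V) : Prop :=
  ∀ (r : V) (c : G.Walk r r), IsShortestEvenHole G c → ¬GoodHole G c →
    ∀ (u v : V) (P : G.Walk u v), WorstCShortcut G c P → ¬CShallow G c P

/-- The induced subgraph `G[S]` is a path with end-vertices `u` and `v`. -/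
def IsInducedPathOn (G : SimpleGraph V) (u v : V) (S : Set V) : Prop :=
  ∃ Q : G.Walk u v, Q.IsPath ∧ suppSet Q = S ∧
    ∀ a b : V, a ∈ S → b ∈ S → G.Adj a b → s(a, b) ∈ Q.edges


section Aux
variable {G : SimpleGraph V} {u v r : V}

lemma countP_edges_aux [DecidableEq V] (w : G.Walk u v) (z : V) :
    w.edges.countP (fun e => decide (z ∈ e)) + (if z = u then 1 else 0) + (if z = v then 1 else 0)
      = 2 * w.support.count z := by
  induction w with
  | nil =>
    simp only [Walk.edges_nil, List.countP_nil, Walk.support_nil, List.count_cons,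
      List.count_nil, beq_iff_eq]
    by_cases h : z = u <;> simp [h, eq_comm] <;> split <;> omega
  | @cons a b c h w' ih =>
    have hab : a ≠ b := h.ne
    simp only [Walk.edges_cons, Walk.support_cons, List.countP_cons, List.count_cons,
      beq_iff_eq] at *
    have hz : (if decide (z ∈ s(a, b)) = true then 1 else 0)
        = (if z = a then 1 else 0) + (if z = b then 1 else 0) := by
      by_cases h1 : z = a <;> by_cases h2 : z = b <;>
        simp_all [Sym2.mem_iff]
    have hcnt : w'.support.count z + (if a = z then 1 else 0)
        = w'.support.count z + (if z = a then 1 else 0) := by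
      by_cases h1 : z = a <;> simp [h1, eq_comm]
    rw [hcnt]
    omega

lemma path_support_count [DecidableEq V] {w : G.Walk u v} (hw : w.IsPath) (z : V) :
    w.support.count z = if z ∈ w.support then 1 else 0 := by
  by_cases h : z ∈ w.support
  · simp [h, List.count_eq_one_of_mem hw.support_nodup h]
  · simp [h, List.count_eq_zero_of_not_mem h]

lemma end_mem_tail' (w : G.Walk u v) (hw : ¬ w.Nil) : v ∈ w.support.tail := by
  cases w with
  | nil => simp at hw
  | cons h w' => simpa using w'.end_mem_support

lemma cycle_support_count [DecidableEq V] {c : G.Walk r r} (hc : c.IsCycle) (z : V) :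
    c.support.count z = (if z ∈ c.support then 1 else 0) + (if z = r then 1 else 0) := by
  have h2 := c.support_eq_cons
  have hrt : r ∈ c.support.tail := end_mem_tail' c hc.not_nil
  have hnd : c.support.tail.Nodup := hc.2
  rw [h2, List.count_cons]
  have htc : c.support.tail.count z = if z ∈ c.support.tail then 1 else 0 := by
    by_cases h : z ∈ c.support.tail
    · simp [h, List.count_eq_one_of_mem hnd h]
    · simp [h, List.count_eq_zero_of_not_mem h]
  rw [htc]
  by_cases h : z = r
  · subst h; simp [hrt]
  · have hrz : (r == z) = false := by simp [Ne.symm h]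
    simp [hrz, List.mem_cons, h]
    have hm : z ∈ c.support ↔ z ∈ c.support.tail := ⟨fun hz => by rw [h2] at hz; exact (List.mem_cons.mp hz).resolve_left h,
      fun hz => List.mem_of_mem_tail hz⟩
    simp only [hm]

lemma cycle_countP_edges [DecidableEq V] {c : G.Walk r r} (hc : c.IsCycle) (z : V) :
    c.edges.countP (fun e => decide (z ∈ e)) = if z ∈ c.support then 2 else 0 := by
  have h := countP_edges_aux c z
  rw [cycle_support_count hc z] at h
  have hr : r ∈ c.support := c.start_mem_support
  by_cases h1 : z = r
  · subst h1; simp only [hr, if_true] at h ⊢; omega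
  · by_cases h2 : z ∈ c.support <;> simp only [h1, h2, if_true, if_false] at h ⊢ <;> omega

lemma path_countP_edges [DecidableEq V] {w : G.Walk u v} (hw : w.IsPath) (z : V) :
    w.edges.countP (fun e => decide (z ∈ e)) + (if z = u then 1 else 0) + (if z = v then 1 else 0)
      = if z ∈ w.support then 2 else 0 := by
  have h := countP_edges_aux w z
  rw [path_support_count hw z] at h
  by_cases h3 : z ∈ w.support <;> simp only [h3, if_true, if_false] at h ⊢ <;> omega

lemma mem_support_of_mem_edge {w : G.Walk u v} {e : Sym2 V} {z : V}
    (he : e ∈ w.edges) (hz : z ∈ e) : z ∈ w.support := by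
  induction e with
  | h x y =>
    rcases Sym2.mem_iff.mp hz with h | h <;> subst h
    · exact w.fst_mem_support_of_mem_edges he
    · exact w.snd_mem_support_of_mem_edges he

lemma exists_edge_of_mem_support {w : G.Walk u v} (hnil : ¬ w.Nil) {z : V}
    (hz : z ∈ w.support) : ∃ e ∈ w.edges, z ∈ e := by
  induction w with
  | nil => simp at hnil
  | @cons a b c h w' ih =>
    rcases List.mem_cons.mp hz with h1 | h1
    · exact ⟨s(a, b), by simp, by simp [h1]⟩
    · by_cases hn : w'.Nil
      · have hzb : z = b := by
          cases w' with
          | nil => simpa using h1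
          | cons h w'' => simp at hn
        exact ⟨s(a, b), by simp, by simp [hzb]⟩
      · obtain ⟨e, he, hze⟩ := ih hn h1
        exact ⟨e, by simp [he], hze⟩

lemma loop_path_eq_nil {w : G.Walk u u} (hw : w.IsPath) : w = Walk.nil := by
  cases w with
  | nil => rfl
  | cons h w' =>
    exfalso
    have h1 := hw.support_nodup
    rw [Walk.support_cons] at h1
    exact (List.nodup_cons.mp h1).1 w'.end_mem_support

lemma edge_of_length_one {w : G.Walk u v} (h : w.length = 1) : s(u, v) ∈ w.edges := by
  cases w with
  | nil => simp at h
  | cons hadj w' =>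
    rename_i b
    have h0 : w'.length = 0 := by simpa using h
    have hb : b = v := Walk.eq_of_length_eq_zero h0
    subst hb
    simp

lemma edges_chain' (w : G.Walk u v) :
    w.edges.Chain' (fun e f => ∃ z, z ∈ e ∧ z ∈ f) := by
  induction w with
  | nil => exact List.isChain_nil
  | @cons a b c h w' ih =>
    rw [Walk.edges_cons]
    cases w' with
    | nil => exact List.isChain_singleton _
    | @cons a' b' c' h' w'' =>
      refine List.isChain_cons_cons.mpr ⟨⟨b, by simp, by simp⟩, ih⟩

lemma exists_crossing {α : Type*} {R : α → α → Prop} {P : α → Prop} :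
    ∀ L : List α, L.Chain' R → (∃ x ∈ L, P x) → (∃ y ∈ L, ¬ P y) →
    ∃ e f, e ∈ L ∧ f ∈ L ∧ R e f ∧ ((P e ∧ ¬ P f) ∨ (¬ P e ∧ P f)) := by
  intro L
  induction L with
  | nil => rintro _ ⟨x, hx, _⟩; simp at hx
  | cons a t ih =>
    intro hch ⟨x, hx, hPx⟩ ⟨y, hy, hPy⟩
    cases t with
    | nil =>
      simp only [List.mem_singleton] at hx hy
      subst hx; subst hy; exact absurd hPx hPy
    | cons b t' =>
      have hRab : R a b := (List.isChain_cons_cons.mp hch).1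
      have hch' : (b :: t').Chain' R := (List.isChain_cons_cons.mp hch).2
      by_cases hPa : P a <;> by_cases hPb : P b
      · -- both true: need a ¬P witness in b::t'
        have hy' : y ∈ b :: t' := by
          rcases List.mem_cons.mp hy with h | h
          · exact absurd (h ▸ hPy) (by simp [hPa])
          · exact h
        obtain ⟨e, f, he, hf, hR, hx⟩ := ih hch' ⟨b, by simp, hPb⟩ ⟨y, hy', hPy⟩
        exact ⟨e, f, by simp [he], by simp [hf], hR, hx⟩
      · exact ⟨a, b, by simp, by simp, hRab, Or.inl ⟨hPa, hPb⟩⟩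
      · exact ⟨a, b, by simp, by simp, hRab, Or.inr ⟨hPa, hPb⟩⟩
      · have hx' : x ∈ b :: t' := by
          rcases List.mem_cons.mp hx with h | h
          · exact absurd (h ▸ hPx) (by simp [hPa])
          · exact h
        obtain ⟨e, f, he, hf, hR, hxx⟩ := ih hch' ⟨x, hx', hPx⟩ ⟨b, by simp, hPb⟩
        exact ⟨e, f, by simp [he], by simp [hf], hR, hxx⟩

lemma countP_eq_filter_card {α : Type*} [DecidableEq α] (l : List α) (hl : l.Nodup)
    (p : α → Prop) [DecidablePred p] :
    (l.toFinset.filter p).card = l.countP (fun a => decide (p a)) := by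
  have h1 : (l.filter (fun a => decide (p a))).toFinset
      = l.toFinset.filter p := by
    rw [List.toFinset_filter]
    apply Finset.filter_congr
    intro x _; simp
  rw [← h1, List.card_toFinset,
    List.Nodup.dedup (List.Nodup.filter _ hl), List.countP_eq_length_filter]

lemma two_paths_in_cycle [DecidableEq V] {c : G.Walk r r} (hc : c.IsCycle)
    {x y : V} (hxy : x ≠ y) {Q R : G.Walk x y}
    (hQp : Q.IsPath) (hQe : ∀ e ∈ Q.edges, e ∈ c.edges)
    (hRp : R.IsPath) (hRe : ∀ e ∈ R.edges, e ∈ c.edges) :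
    Q.length = R.length ∨ Q.length + R.length = c.length := by
  set E := c.edges.toFinset with hE
  set EQ := Q.edges.toFinset with hEQ
  set ER := R.edges.toFinset with hER
  have hcE : E.card = c.length := by
    rw [hE, List.card_toFinset, (hc.isTrail.edges_nodup).dedup, Walk.length_edges]
  have hcQ : EQ.card = Q.length := by
    rw [hEQ, List.card_toFinset, (hQp.isTrail.edges_nodup).dedup, Walk.length_edges]
  have hcR : ER.card = R.length := by
    rw [hER, List.card_toFinset, (hRp.isTrail.edges_nodup).dedup, Walk.length_edges]
  have hQE : EQ ⊆ E := by intro e he; rw [List.mem_toFinset] at *; exact hQe e he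
  have hRE : ER ⊆ E := by intro e he; rw [List.mem_toFinset] at *; exact hRe e he
  set D := (EQ \ ER) ∪ (ER \ EQ) with hD
  have heven : ∀ z : V, (D.filter (fun e => z ∈ e)).card % 2 = 0 := by
    intro z
    set fQ := EQ.filter (fun e => z ∈ e) with hfQ
    set fR := ER.filter (fun e => z ∈ e) with hfR
    have hsplit : D.filter (fun e => z ∈ e) = (fQ \ fR) ∪ (fR \ fQ) := by
      ext e
      simp only [hfQ, hfR, hD, Finset.mem_filter, Finset.mem_union, Finset.mem_sdiff]
      tauto
    have hdisj : Disjoint (fQ \ fR) (fR \ fQ) := disjoint_sdiff_sdiff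
    have h1 : (fQ \ fR).card + (fQ ∩ fR).card = fQ.card := Finset.card_sdiff_add_card_inter _ _
    have h2 : (fR \ fQ).card + (fR ∩ fQ).card = fR.card := Finset.card_sdiff_add_card_inter _ _
    have h3 : (fR ∩ fQ) = (fQ ∩ fR) := Finset.inter_comm _ _
    have hQcnt := path_countP_edges hQp z
    have hRcnt := path_countP_edges hRp z
    have hQf : fQ.card = Q.edges.countP (fun e => decide (z ∈ e)) :=
      countP_eq_filter_card _ hQp.isTrail.edges_nodup _
    have hRf : fR.card = R.edges.countP (fun e => decide (z ∈ e)) :=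
      countP_eq_filter_card _ hRp.isTrail.edges_nodup _
    rw [hsplit, Finset.card_union_of_disjoint hdisj]
    rw [h3] at h2
    rw [← hQf] at hQcnt
    rw [← hRf] at hRcnt
    have hsQ : (if z ∈ Q.support then 2 else 0) = 2 ∨ (if z ∈ Q.support then 2 else 0) = 0 := by
      split <;> simp
    have hsR : (if z ∈ R.support then 2 else 0) = 2 ∨ (if z ∈ R.support then 2 else 0) = 0 := by
      split <;> simp
    omega
  by_cases hDempty : D = ∅
  · left
    have h1 : EQ \ ER = ∅ := by
      rw [hD] at hDempty
      exact Finset.union_eq_empty.mp hDempty |>.1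
    have h2 : ER \ EQ = ∅ := by
      rw [hD] at hDempty
      exact Finset.union_eq_empty.mp hDempty |>.2
    have : EQ = ER :=
      Finset.Subset.antisymm (Finset.sdiff_eq_empty_iff_subset.mp h1)
        (Finset.sdiff_eq_empty_iff_subset.mp h2)
    rw [← hcQ, ← hcR, this]
  · right
    have hDE : D ⊆ E := by
      intro e he
      rw [hD] at he
      rcases Finset.mem_union.mp he with h | h
      · exact hQE (Finset.mem_sdiff.mp h).1
      · exact hRE (Finset.mem_sdiff.mp h).1
    have hDeqE : D = E := by
      by_contra hne
      obtain ⟨f, hf⟩ : ∃ f, f ∈ E \ D := by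
        rcases Finset.exists_of_ssubset (Finset.ssubset_iff_subset_ne.mpr ⟨hDE, hne⟩)
          with ⟨f, hf1, hf2⟩
        exact ⟨f, Finset.mem_sdiff.mpr ⟨hf1, hf2⟩⟩
      obtain ⟨e0, he0⟩ := Finset.nonempty_iff_ne_empty.mpr hDempty
      have he0L : e0 ∈ c.edges := List.mem_toFinset.mp (hDE he0)
      have hfL : f ∈ c.edges := List.mem_toFinset.mp (Finset.mem_sdiff.mp hf).1
      obtain ⟨e, f', heL, hfL', ⟨z, hze, hzf⟩, hcross⟩ :=
        exists_crossing (P := fun e => e ∈ D) c.edges (edges_chain' c)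
          ⟨e0, he0L, he0⟩ ⟨f, hfL, (Finset.mem_sdiff.mp hf).2⟩
      have hzc : z ∈ c.support := mem_support_of_mem_edge heL hze
      have hEfz : (E.filter (fun e => z ∈ e)).card = 2 := by
        rw [countP_eq_filter_card _ hc.isTrail.edges_nodup, cycle_countP_edges hc z,
          if_pos hzc]
      have hef : e ≠ f' := by rintro rfl; tauto
      have hsub : ({e, f'} : Finset (Sym2 V)) ⊆ E.filter (fun e => z ∈ e) := by
        intro g hg
        rcases Finset.mem_insert.mp hg with h | h
        · subst h; exact Finset.mem_filter.mpr ⟨List.mem_toFinset.mpr heL, hze⟩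
        · rw [Finset.mem_singleton] at h
          subst h; exact Finset.mem_filter.mpr ⟨List.mem_toFinset.mpr hfL', hzf⟩
      have hpair : E.filter (fun e => z ∈ e) = {e, f'} := by
        refine (Finset.eq_of_subset_of_card_le hsub ?_).symm
        rw [hEfz, Finset.card_insert_of_notMem (by simp [hef]), Finset.card_singleton]
      have hDsub : D.filter (fun e => z ∈ e) ⊆ {e, f'} := by
        rw [← hpair]
        exact Finset.filter_subset_filter _ hDE
      have hodd : (D.filter (fun e => z ∈ e)).card = 1 := by
        rcases hcross with ⟨he1, hf1⟩ | ⟨he1, hf1⟩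
        · have : D.filter (fun e => z ∈ e) = {e} := by
            apply Finset.Subset.antisymm
            · intro g hg
              have := hDsub hg
              rcases Finset.mem_insert.mp this with h | h
              · simp [h]
              · rw [Finset.mem_singleton] at h
                subst h
                exact absurd (Finset.mem_filter.mp hg).1 hf1
            · intro g hg
              rw [Finset.mem_singleton] at hg
              subst hg
              exact Finset.mem_filter.mpr ⟨he1, hze⟩
          rw [this, Finset.card_singleton]
        · have : D.filter (fun e => z ∈ e) = {f'} := by
            apply Finset.Subset.antisymm
            · intro g hg
              have := hDsub hg
              rcases Finset.mem_insert.mp this with h | h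
              · subst h
                exact absurd (Finset.mem_filter.mp hg).1 he1
              · simp [h]
            · intro g hg
              rw [Finset.mem_singleton] at hg
              subst hg
              exact Finset.mem_filter.mpr ⟨hf1, hzf⟩
          rw [this, Finset.card_singleton]
      have := heven z
      rw [hodd] at this
      omega
    have hinter : EQ ∩ ER = ∅ := by
      by_contra hne
      obtain ⟨g, hg⟩ := Finset.nonempty_iff_ne_empty.mpr hne
      rcases Finset.mem_inter.mp hg with ⟨h1, h2⟩
      have : g ∈ D := by rw [hDeqE]; exact hQE h1
      rw [hD] at this
      rcases Finset.mem_union.mp this with h | h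
      · exact (Finset.mem_sdiff.mp h).2 h2
      · exact (Finset.mem_sdiff.mp h).2 h1
    have hcover : EQ ∪ ER = E := by
      apply Finset.Subset.antisymm
      · exact Finset.union_subset hQE hRE
      · rw [← hDeqE, hD]
        intro g hg
        rcases Finset.mem_union.mp hg with h | h
        · exact Finset.mem_union_left _ (Finset.mem_sdiff.mp h).1
        · exact Finset.mem_union_right _ (Finset.mem_sdiff.mp h).1
    have := Finset.card_union_add_card_inter EQ ER
    rw [hcover, hinter] at this
    simp at this
    omega

lemma induced_of_shortest [DecidableEq V] :
    ∀ {u v : V} (w : G.Walk u v), (∀ Q : G.Walk u v, w.length ≤ Q.length) →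
    ∀ a b : V, a ∈ w.support → b ∈ w.support → G.Adj a b → s(a, b) ∈ w.edges := by
  intro u v w
  induction w with
  | nil =>
    intro _ a b ha hb hadj
    simp only [Walk.support_nil, List.mem_singleton] at ha hb
    subst ha; subst hb
    exact absurd hadj G.irrefl
  | @cons p m q h w' ih =>
    intro hmin a b ha hb hadj
    have hmin' : ∀ Q : G.Walk m q, w'.length ≤ Q.length := by
      intro Q
      have := hmin (Walk.cons h Q)
      simpa using this
    have key : ∀ b' : V, b' ∈ w'.support → G.Adj p b' → s(p, b') ∈ (Walk.cons h w').edges := by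
      intro b' hb' hadj'
      have hmb : (w'.takeUntil b' hb').length + (w'.dropUntil b' hb').length = w'.length := by
        rw [← Walk.length_append, Walk.take_spec]
      have := hmin (Walk.cons hadj' (w'.dropUntil b' hb'))
      simp only [Walk.length_cons] at this
      have h0 : (w'.takeUntil b' hb').length = 0 := by omega
      have hmb' : m = b' := Walk.eq_of_length_eq_zero h0
      subst hmb'
      simp
    rcases List.mem_cons.mp ha with ha1 | ha1 <;> rcases List.mem_cons.mp hb with hb1 | hb1
    · subst ha1; subst hb1; exact absurd hadj G.irrefl
    · subst ha1; exact key b hb1 hadj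
    · subst hb1
      rw [Sym2.eq_swap]
      exact key a ha1 hadj.symm
    · have := ih hmin' a b ha1 hb1 hadj
      rw [Walk.edges_cons]
      exact List.mem_cons_of_mem _ this

/-- If `W` is a path from `x` to `y`, its edges lie in a list `L` in which at most one
edge contains `x`, and `s(x,y) ∈ L`, then `W` has length 1. -/
lemma length_one_of_unique_end [DecidableEq V] {x y : V} {W : G.Walk x y} (hW : W.IsPath)
    (hxy : x ≠ y) {L : List (Sym2 V)}
    (hsub : ∀ e ∈ W.edges, e ∈ L)
    (hone : L.countP (fun e => decide (x ∈ e)) ≤ 1)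
    (hmem : s(x, y) ∈ L) : W.length = 1 := by
  cases W with
  | nil => exact absurd rfl hxy
  | cons hadj W' =>
    rename_i z
    have h1 : s(x, z) ∈ L := hsub _ (by simp)
    have heq : s(x, z) = s(x, y) := by
      by_contra hne
      have h2 : ({s(x, z), s(x, y)} : Finset (Sym2 V)) ⊆ (L.toFinset.filter
          (fun e => x ∈ e)) := by
        intro g hg
        rcases Finset.mem_insert.mp hg with h | h
        · subst h; exact Finset.mem_filter.mpr ⟨List.mem_toFinset.mpr h1, by simp⟩
        · rw [Finset.mem_singleton] at h
          subst h; exact Finset.mem_filter.mpr ⟨List.mem_toFinset.mpr hmem, by simp⟩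
      have h3 : 2 ≤ (L.toFinset.filter (fun e => x ∈ e)).card := by
        calc 2 = ({s(x, z), s(x, y)} : Finset (Sym2 V)).card := by
                  rw [Finset.card_insert_of_notMem (by simp [hne]), Finset.card_singleton]
          _ ≤ _ := Finset.card_le_card h2
      have h4 : (L.toFinset.filter (fun e => x ∈ e)).card
          ≤ L.countP (fun e => decide (x ∈ e)) := by
        classical
        calc (L.toFinset.filter (fun e => x ∈ e)).card
            = ((L.dedup).filter (fun e => decide (x ∈ e))).length := by
              rw [← List.countP_eq_length_filter]
              rw [← countP_eq_filter_card _ (List.nodup_dedup L) (fun e => x ∈ e)]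
              have hdt : L.dedup.toFinset = L.toFinset := by ext e; simp
              rw [hdt]
          _ ≤ (L.filter (fun e => decide (x ∈ e))).length := by
              apply List.Sublist.length_le
              exact (List.dedup_sublist L).filter _
          _ = L.countP (fun e => decide (x ∈ e)) := List.countP_eq_length_filter.symm
      omega
    have hzy : z = y := by
      rcases Sym2.eq_iff.mp heq with ⟨_, h⟩ | ⟨h1', _⟩
      · exact h
      · exact absurd h1' hxy
    subst hzy
    have : W' = Walk.nil := loop_path_eq_nil (by
      have := hW
      rw [Walk.cons_isPath_iff] at this
      exact this.1)
    rw [this]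
    simp
lemma support_subset_of_edges_subset {x y : V} {c : G.Walk r r} {W : G.Walk x y}
    (hW : ∀ e ∈ W.edges, e ∈ c.edges) (hx : x ∈ c.support) :
    ∀ z ∈ W.support, z ∈ c.support := by
  intro z hz
  by_cases hnil : W.Nil
  · have h0 : W.length = 0 := Walk.nil_iff_length_eq.mp hnil
    have : W.support = [x] := by
      cases W with
      | nil => rfl
      | cons h w' => simp at h0
    rw [this] at hz
    simp only [List.mem_singleton] at hz
    exact hz ▸ hx
  · obtain ⟨e, he, hze⟩ := exists_edge_of_mem_support hnil hz
    exact mem_support_of_mem_edge (hW e he) hze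

lemma suppSet_eq_coe [DecidableEq V] {x y : V} (w : G.Walk x y) :
    suppSet w = ↑w.support.toFinset := by
  ext z; simp [suppSet]

lemma ncard_suppSet_path [DecidableEq V] {x y : V} {w : G.Walk x y} (hw : w.IsPath) :
    w.support.toFinset.card = w.length + 1 := by
  rw [List.card_toFinset, hw.support_nodup.dedup, Walk.length_support]

lemma ncard_suppSet_cycle [DecidableEq V] {c : G.Walk r r} (hc : c.IsCycle) :
    c.support.toFinset.card = c.length := by
  have h2 := c.support_eq_cons
  have hrt : r ∈ c.support.tail := end_mem_tail' c hc.not_nil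
  have : c.support.toFinset = c.support.tail.toFinset := by
    conv_lhs => rw [h2]
    rw [List.toFinset_cons, Finset.insert_eq_self.mpr (List.mem_toFinset.mpr hrt)]
  rw [this, List.card_toFinset, hc.2.dedup]
  have h3 : c.support.length = c.length + 1 := c.length_support
  rw [h2] at h3
  simp only [List.length_cons] at h3
  omega

lemma good_bound [DecidableEq V] {c : G.Walk r r} (hC : IsShortestEvenHole G c)
    {x y : V} (hxy : x ≠ y) {W : G.Walk x y} (hWp : W.IsPath) (hg : CGood G c W) :
    ∃ Q : G.Walk x y, IsPathOf G c Q ∧ c.length ≤ W.length + Q.length := by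
  obtain ⟨Q, hQ, r0, w0, hw0, hsupp⟩ := hg
  refine ⟨Q, hQ, ?_⟩
  have hcyc : w0.IsCycle := hw0.1.1.1.1
  have hlen : c.length ≤ w0.length := hC.2 r0 w0 hw0.1
  have hfin : w0.support.toFinset = W.support.toFinset ∪ Q.support.toFinset := by
    apply Finset.coe_injective
    rw [Finset.coe_union, ← suppSet_eq_coe, ← suppSet_eq_coe, ← suppSet_eq_coe, hsupp]
  have hcard : w0.length = (W.support.toFinset ∪ Q.support.toFinset).card := by
    rw [← hfin, ncard_suppSet_cycle hcyc]
  have hQp : Q.IsPath := hQ.1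
  have hint : ({x, y} : Finset V) ⊆ W.support.toFinset ∩ Q.support.toFinset := by
    intro z hz
    rcases Finset.mem_insert.mp hz with h | h
    · subst h
      exact Finset.mem_inter.mpr ⟨List.mem_toFinset.mpr W.start_mem_support,
        List.mem_toFinset.mpr Q.start_mem_support⟩
    · rw [Finset.mem_singleton] at h
      subst h
      exact Finset.mem_inter.mpr ⟨List.mem_toFinset.mpr W.end_mem_support,
        List.mem_toFinset.mpr Q.end_mem_support⟩
  have h2 : 2 ≤ (W.support.toFinset ∩ Q.support.toFinset).card := by
    calc 2 = ({x, y} : Finset V).card := by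
            rw [Finset.card_insert_of_notMem (by simp [hxy]), Finset.card_singleton]
      _ ≤ _ := Finset.card_le_card hint
  have hu := Finset.card_union_add_card_inter W.support.toFinset Q.support.toFinset
  have hWc := ncard_suppSet_path hWp
  have hQc := ncard_suppSet_path hQp
  omega

lemma side_dichotomy [DecidableEq V] {c : G.Walk r r} (hc : c.IsCycle)
    (hC : IsShortestEvenHole G c) {u v : V} {P : G.Walk u v}
    (hworst : WorstCShortcut G c P) (h4k : 4 * P.length < c.length)
    {x y : V} (hxy : x ≠ y) (hxc : x ∈ c.support) (hyc : y ∈ c.support)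
    {A : G.Walk x y} (hApath : A.IsPath) (hAc : ∀ e ∈ A.edges, e ∈ c.edges)
    (hβk : A.length + (P.length + 1) ≤ c.length)
    (htk : G.dist x y ≤ P.length)
    (hadj1 : G.Adj x y → A.length = 1) :
    G.dist x y = A.length ∨
      (G.dist x y = P.length ∧ P.length ≤ A.length ∧
        (A.length ≤ cycleDist G c u v ∨ c.length ≤ A.length + cycleDist G c u v)) := by
  set t := G.dist x y with hT
  have hreach : G.Reachable x y := ⟨A⟩
  have htA : t ≤ A.length := SimpleGraph.dist_le A
  have ht0 : t ≠ 0 := by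
    intro h0
    rcases SimpleGraph.dist_eq_zero_iff_eq_or_not_reachable.mp h0 with h | h
    · exact hxy h
    · exact h hreach
  by_cases ht1 : t = 1
  · left
    have hadj : G.Adj x y := SimpleGraph.dist_eq_one_iff_adj.mp ht1
    rw [ht1, hadj1 hadj]
  have ht2 : 2 ≤ t := by omega
  have hnadj : ¬ G.Adj x y := by
    intro hadj
    exact ht1 (SimpleGraph.dist_eq_one_iff_adj.mpr hadj)
  obtain ⟨W, hWp, hWl⟩ := hreach.exists_path_of_dist
  have arcAll : ∀ Q : G.Walk x y, IsPathOf G c Q →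
      Q.length = A.length ∨ Q.length + A.length = c.length := by
    intro Q hQ
    exact two_paths_in_cycle hc hxy hQ.1 hQ.2 hApath hAc
  have hsetup : ShortcutSetup G c W := ⟨hWp, hxy, hnadj, hxc, hyc⟩
  have hWcd : W.length ≤ cycleDist G c x y := by
    have hmem : cycleDist G c x y ∈
        {n | ∃ Pp : G.Walk x y, IsPathOf G c Pp ∧ Pp.length = n} :=
      Nat.sInf_mem ⟨A.length, A, ⟨hApath, hAc⟩, rfl⟩
    obtain ⟨Q0, hQ0, hQ0l⟩ := hmem
    rcases arcAll Q0 hQ0 with h | h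
    · rw [hWl, ← hQ0l, h]; exact htA
    · rw [hWl, ← hQ0l]; omega
  have hshort : CShortcut G c W := by
    refine ⟨by rw [hWl]; omega, hWcd, ?_⟩
    rw [hWl]; omega
  by_cases hgood : CGood G c W
  · left
    obtain ⟨Q, hQ, hb⟩ := good_bound hC hxy hWp hgood
    rcases arcAll Q hQ with h | h
    · rw [hWl] at hb; omega
    · rw [hWl] at hb; omega
  · right
    rcases hworst.2.2.2 x y W hsetup hshort hgood with h | ⟨h1, h2⟩
    · rw [hWl] at h; omega
    · have hmem : cycleDist G c x y ∈
          {n | ∃ Pp : G.Walk x y, IsPathOf G c Pp ∧ Pp.length = n} :=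
        Nat.sInf_mem ⟨A.length, A, ⟨hApath, hAc⟩, rfl⟩
      obtain ⟨Q0, hQ0, hQ0l⟩ := hmem
      have ht_eq : t = P.length := by rw [hWl] at h1; omega
      refine ⟨ht_eq, by omega, ?_⟩
      rcases arcAll Q0 hQ0 with h | h
      · left; rw [← h, hQ0l]; exact h2
      · right; omega

end Aux

theorem stmt7 (G : SimpleGraph V) {r u v : V} (c : G.Walk r r)
    (hC : IsShortestEvenHole G c) (P : G.Walk u v)
    (hworst : WorstCShortcut G c P) (hshallow : CShallow G c P)
    (C1 C2 : G.Walk u v) (harc : ArcPair G c C1 C2) (hle : C1.length ≤ C2.length) :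
    ∀ Puv : G.Walk u v, IsShortestPath G Puv →
      Puv.length = P.length ∧ IsHoleOn G (suppSet Puv ∪ suppSet C2) := by
  classical
  obtain ⟨⟨⟨⟨hcyc, hind⟩, h4c⟩, hev⟩, hmin⟩ := hC
  have hC' : IsShortestEvenHole G c := ⟨⟨⟨⟨hcyc, hind⟩, h4c⟩, hev⟩, hmin⟩
  obtain ⟨hsetup, hshortP, hbadP, hwall⟩ := hworst
  have hworst' : WorstCShortcut G c P := ⟨hsetup, hshortP, hbadP, hwall⟩
  obtain ⟨hPpath, huv, hnadjuv, huc, hvc⟩ := hsetup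
  obtain ⟨hk2, hkcd, h4k⟩ := hshortP
  obtain ⟨hC1, hC2, hsum, hcover⟩ := harc
  set n := c.length with hn
  set d := C1.length with hd
  set q := C2.length with hq
  set k := P.length with hk
  have hn2 : n % 2 = 0 := Nat.even_iff.mp hev
  -- arc dichotomy against C1
  have arcAll1 : ∀ Q : G.Walk u v, IsPathOf G c Q → Q.length = d ∨ Q.length + d = n := by
    intro Q hQ
    exact two_paths_in_cycle hcyc huv hQ.1 hQ.2 hC1.1 hC1.2
  -- cycleDist = d
  have hcduv : cycleDist G c u v = d := by
    have hle1 : cycleDist G c u v ≤ d := Nat.sInf_le ⟨C1, hC1, rfl⟩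
    have hmem : cycleDist G c u v ∈
        {m | ∃ Pp : G.Walk u v, IsPathOf G c Pp ∧ Pp.length = m} :=
      Nat.sInf_mem ⟨d, C1, hC1, rfl⟩
    obtain ⟨Q0, hQ0, hQ0l⟩ := hmem
    rcases arcAll1 Q0 hQ0 with h | h <;> omega
  have hkd : k ≤ d := by rw [hcduv] at hkcd; exact hkcd
  have hd1 : d ≤ k + 1 := by
    have := hshallow.1
    rw [hcduv] at this
    omega
  -- edge partition
  have hC1nd : C1.edges.Nodup := hC1.1.isTrail.edges_nodup
  have hC2nd : C2.edges.Nodup := hC2.1.isTrail.edges_nodup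
  have hcnd : c.edges.Nodup := hcyc.isTrail.edges_nodup
  have hdisjE : ∀ e, e ∈ C1.edges → e ∈ C2.edges → False := by
    have hcard1 : C1.edges.toFinset.card = d := by
      rw [List.card_toFinset, hC1nd.dedup, Walk.length_edges]
    have hcard2 : C2.edges.toFinset.card = q := by
      rw [List.card_toFinset, hC2nd.dedup, Walk.length_edges]
    have hcardc : c.edges.toFinset.card = n := by
      rw [List.card_toFinset, hcnd.dedup, Walk.length_edges]
    have hsub : c.edges.toFinset ⊆ C1.edges.toFinset ∪ C2.edges.toFinset := by
      intro e he
      rcases hcover e (List.mem_toFinset.mp he) with h | h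
      · exact Finset.mem_union_left _ (List.mem_toFinset.mpr h)
      · exact Finset.mem_union_right _ (List.mem_toFinset.mpr h)
    have hcu := Finset.card_union_add_card_inter C1.edges.toFinset C2.edges.toFinset
    have hge : n ≤ (C1.edges.toFinset ∪ C2.edges.toFinset).card := by
      rw [← hcardc]
      exact Finset.card_le_card hsub
    have hle2 : (C1.edges.toFinset ∪ C2.edges.toFinset).card ≤ d + q := by
      rw [← hcard1, ← hcard2]
      exact Finset.card_union_le _ _
    have hint : (C1.edges.toFinset ∩ C2.edges.toFinset).card = 0 := by omega
    intro e h1 h2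
    have : e ∈ C1.edges.toFinset ∩ C2.edges.toFinset :=
      Finset.mem_inter.mpr ⟨List.mem_toFinset.mpr h1, List.mem_toFinset.mpr h2⟩
    rw [Finset.card_eq_zero] at hint
    rw [hint] at this
    exact absurd this (Finset.notMem_empty e)
  -- supports of arcs meet only in u, v
  have hsupp12 : ∀ z, z ∈ C1.support → z ∈ C2.support → z = u ∨ z = v := by
    intro z h1 h2
    by_contra hcon
    push_neg at hcon
    obtain ⟨hzu, hzv⟩ := hcon
    have hc1 := path_countP_edges hC1.1 z
    have hc2 := path_countP_edges hC2.1 z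
    rw [if_neg hzu, if_neg hzv, if_pos h1] at hc1
    rw [if_neg hzu, if_neg hzv, if_pos h2] at hc2
    have hf1 : (C1.edges.toFinset.filter (fun e => z ∈ e)).card = 2 := by
      rw [countP_eq_filter_card _ hC1nd]; omega
    have hf2 : (C2.edges.toFinset.filter (fun e => z ∈ e)).card = 2 := by
      rw [countP_eq_filter_card _ hC2nd]; omega
    have hzc : z ∈ c.support := support_subset_of_edges_subset hC1.2 huc z h1
    have hfc : (c.edges.toFinset.filter (fun e => z ∈ e)).card = 2 := by
      rw [countP_eq_filter_card _ hcnd, cycle_countP_edges hcyc, if_pos hzc]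
    have hsubf : (C1.edges.toFinset.filter (fun e => z ∈ e))
        ∪ (C2.edges.toFinset.filter (fun e => z ∈ e))
        ⊆ c.edges.toFinset.filter (fun e => z ∈ e) := by
      intro e he
      rcases Finset.mem_union.mp he with h | h
      · obtain ⟨h', hz⟩ := Finset.mem_filter.mp h
        exact Finset.mem_filter.mpr
          ⟨List.mem_toFinset.mpr (hC1.2 e (List.mem_toFinset.mp h')), hz⟩
      · obtain ⟨h', hz⟩ := Finset.mem_filter.mp h
        exact Finset.mem_filter.mpr
          ⟨List.mem_toFinset.mpr (hC2.2 e (List.mem_toFinset.mp h')), hz⟩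
    have hdisjf : Disjoint (C1.edges.toFinset.filter (fun e => z ∈ e))
        (C2.edges.toFinset.filter (fun e => z ∈ e)) := by
      rw [Finset.disjoint_left]
      intro e h1' h2'
      exact hdisjE e (List.mem_toFinset.mp (Finset.mem_filter.mp h1').1)
        (List.mem_toFinset.mp (Finset.mem_filter.mp h2').1)
    have := Finset.card_le_card hsubf
    rw [Finset.card_union_of_disjoint hdisjf, hf1, hf2, hfc] at this
    omega
  have hsuppC2c : ∀ z ∈ C2.support, z ∈ c.support :=
    support_subset_of_edges_subset hC2.2 huc
  have hsuppPuvInC2 : u ∈ C2.support := C2.start_mem_support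
  have hvC2 : v ∈ C2.support := C2.end_mem_support
  -- adjacency within C2's support gives a C2 edge
  have edgeC2 : ∀ a b : V, a ∈ C2.support → b ∈ C2.support → G.Adj a b →
      s(a, b) ∈ C2.edges := by
    intro a b ha hb hadj
    have hce : s(a, b) ∈ c.edges := hind a b (hsuppC2c a ha) (hsuppC2c b hb) hadj
    rcases hcover _ hce with h | h
    · exfalso
      have ha1 : a ∈ C1.support := mem_support_of_mem_edge h (by simp)
      have hb1 : b ∈ C1.support := mem_support_of_mem_edge h (by simp)
      rcases hsupp12 a ha1 ha with h1 | h1 <;> rcases hsupp12 b hb1 hb with h2 | h2 <;>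
        subst h1 <;> subst h2
      · exact G.irrefl hadj
      · exact hnadjuv hadj
      · exact hnadjuv hadj.symm
      · exact G.irrefl hadj
    · exact h
  -- count of C2 edges at u and at v
  have honeu : C2.edges.countP (fun e => decide (u ∈ e)) ≤ 1 := by
    have := path_countP_edges hC2.1 u
    rw [if_pos rfl, if_neg huv, if_pos hsuppPuvInC2] at this
    omega
  have honev : C2.edges.countP (fun e => decide (v ∈ e)) ≤ 1 := by
    have := path_countP_edges hC2.1 v
    rw [if_neg (Ne.symm huv), if_pos rfl, if_pos hvC2] at this
    omega
  intro Puv hPuv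
  obtain ⟨hPuvp, hPuvmin⟩ := hPuv
  have hle0 : Puv.length ≤ k := hPuvmin P
  -- Part 1 : lengths agree
  have hlen : Puv.length = k := by
    by_contra hne
    have hlt : Puv.length < k := lt_of_le_of_ne hle0 hne
    have hl0 : Puv.length ≠ 0 := by
      intro h0
      exact huv (Walk.eq_of_length_eq_zero h0)
    have hl1 : Puv.length ≠ 1 := by
      intro h1
      exact hnadjuv (Walk.adj_of_length_eq_one h1)
    have hsetup' : ShortcutSetup G c Puv := ⟨hPuvp, huv, hnadjuv, huc, hvc⟩
    have hshort' : CShortcut G c Puv := by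
      refine ⟨by omega, ?_, by omega⟩
      rw [hcduv]; omega
    by_cases hgood : CGood G c Puv
    · obtain ⟨Q, hQ, hb⟩ := good_bound hC' huv hPuvp hgood
      rcases arcAll1 Q hQ with h | h <;> omega
    · rcases hwall u v Puv hsetup' hshort' hgood with h | ⟨h1, h2⟩ <;> omega
  refine ⟨hlen, ?_⟩
  -- Part 2 : the hole
  have hPuvInd : ∀ a b : V, a ∈ Puv.support → b ∈ Puv.support → G.Adj a b →
      s(a, b) ∈ Puv.edges := induced_of_shortest Puv hPuvmin
  -- the key claim
  have star : ∀ x0, x0 ∈ Puv.support → x0 ≠ u → x0 ≠ v →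
      ∀ y0, y0 ∈ C2.support → y0 ≠ u → y0 ≠ v → (x0 = y0 ∨ G.Adj x0 y0) → False := by
    intro x0 hx0 hx0u hx0v y0 hy0 hy0u hy0v hxy0
    set b := (C2.takeUntil y0 hy0).length with hb
    set bq := (C2.dropUntil y0 hy0).length with hbq
    have hbsum : b + bq = q := by
      rw [hb, hbq, ← Walk.length_append, Walk.take_spec]
    have hb1 : 1 ≤ b := by
      rcases Nat.eq_zero_or_pos b with h | h
      · have h0 : (C2.takeUntil y0 hy0).length = 0 := by omega
        exact absurd (Walk.eq_of_length_eq_zero h0) ((Ne.symm hy0u))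
      · exact h
    have hbq1 : 1 ≤ bq := by
      rcases Nat.eq_zero_or_pos bq with h | h
      · have h0 : (C2.dropUntil y0 hy0).length = 0 := by omega
        exact absurd (Walk.eq_of_length_eq_zero h0) (hy0v)
      · exact h
    set a := (Puv.takeUntil x0 hx0).length with ha
    set aq := (Puv.dropUntil x0 hx0).length with haq
    have hasum : a + aq = Puv.length := by
      rw [ha, haq, ← Walk.length_append, Walk.take_spec]
    have ha1 : 1 ≤ a := by
      rcases Nat.eq_zero_or_pos a with h | h
      · have h0 : (Puv.takeUntil x0 hx0).length = 0 := by omega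
        exact absurd (Walk.eq_of_length_eq_zero h0) ((Ne.symm hx0u))
      · exact h
    have haq1 : 1 ≤ aq := by
      rcases Nat.eq_zero_or_pos aq with h | h
      · have h0 : (Puv.dropUntil x0 hx0).length = 0 := by omega
        exact absurd (Walk.eq_of_length_eq_zero h0) (hx0v)
      · exact h
    obtain ⟨ε, hεle, htu, htv⟩ : ∃ ε, ε ≤ 1 ∧ G.dist u y0 ≤ a + ε ∧
        G.dist v y0 ≤ aq + ε := by
      rcases hxy0 with h | h
      · subst h
        refine ⟨0, by omega, ?_, ?_⟩
        · have := SimpleGraph.dist_le (Puv.takeUntil x0 hx0)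
          omega
        · have := SimpleGraph.dist_le (Puv.dropUntil x0 hx0).reverse
          rw [Walk.length_reverse] at this
          omega
      · refine ⟨1, le_refl 1, ?_, ?_⟩
        · have := SimpleGraph.dist_le ((Puv.takeUntil x0 hx0).concat h)
          rw [Walk.length_concat] at this
          omega
        · have := SimpleGraph.dist_le ((Puv.dropUntil x0 hx0).reverse.concat h)
          rw [Walk.length_concat, Walk.length_reverse] at this
          omega
    -- u-side dichotomy
    have hAu_path : (C2.takeUntil y0 hy0).IsPath := hC2.1.takeUntil hy0
    have hAu_edges : ∀ e ∈ (C2.takeUntil y0 hy0).edges, e ∈ c.edges := by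
      intro e he
      exact hC2.2 e (Walk.edges_takeUntil_subset _ hy0 he)
    have Du := side_dichotomy hcyc hC' hworst' h4k (Ne.symm hy0u) huc
      (hsuppC2c y0 hy0) hAu_path hAu_edges (by omega)
      (by omega)
      (by
        intro hadj
        refine length_one_of_unique_end hAu_path (Ne.symm hy0u)
          (fun e he => Walk.edges_takeUntil_subset _ hy0 he) honeu ?_
        exact edgeC2 u y0 hsuppPuvInC2 hy0 hadj)
    -- v-side dichotomy
    have hAv_path : (C2.dropUntil y0 hy0).reverse.IsPath := (hC2.1.dropUntil hy0).reverse
    have hAv_len : (C2.dropUntil y0 hy0).reverse.length = bq := Walk.length_reverse _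
    have hAv_edges : ∀ e ∈ (C2.dropUntil y0 hy0).reverse.edges, e ∈ c.edges := by
      intro e he
      rw [Walk.edges_reverse, List.mem_reverse] at he
      exact hC2.2 e (Walk.edges_dropUntil_subset _ hy0 he)
    have Dv := side_dichotomy hcyc hC' hworst' h4k (Ne.symm hy0v) hvc
      (hsuppC2c y0 hy0) hAv_path hAv_edges (by omega)
      (by omega)
      (by
        intro hadj
        rw [hAv_len]
        have : (C2.dropUntil y0 hy0).reverse.length = 1 := by
          refine length_one_of_unique_end hAv_path (Ne.symm hy0v)
            (fun e he => ?_) honev ?_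
          · rw [Walk.edges_reverse, List.mem_reverse] at he
            exact Walk.edges_dropUntil_subset _ hy0 he
          · exact edgeC2 v y0 hvC2 hy0 hadj
        rw [← hAv_len]; exact this)
    rw [hAv_len] at Dv
    rw [hcduv] at Du Dv
    -- final arithmetic
    rcases Du with h1 | ⟨h1, h1', h1''⟩ <;> rcases Dv with h2 | ⟨h2, h2', h2''⟩ <;> omega
  -- supports intersect only in u,v
  have hdisjsupp : ∀ z, z ∈ Puv.support → z ∈ C2.support → z = u ∨ z = v := by
    intro z h1 h2
    by_contra hcon
    push_neg at hcon
    exact star z h1 hcon.1 hcon.2 z h2 hcon.1 hcon.2 (Or.inl rfl)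
  -- the cycle
  set w' : G.Walk u u := Puv.append C2.reverse with hw'
  have hw'len : w'.length = Puv.length + q := by
    rw [hw', Walk.length_append, Walk.length_reverse]
  have hmemw' : ∀ z, z ∈ w'.support ↔ z ∈ Puv.support ∨ z ∈ C2.support := by
    intro z
    rw [hw', Walk.mem_support_append_iff, Walk.support_reverse, List.mem_reverse]
  have hedgew' : ∀ e, e ∈ w'.edges ↔ e ∈ Puv.edges ∨ e ∈ C2.edges := by
    intro e
    rw [hw', Walk.edges_append, List.mem_append, Walk.edges_reverse, List.mem_reverse]
  have hq3 : 3 * k ≤ q := by omega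
  have hcycw' : w'.IsCycle := by
    rw [Walk.isCycle_def]
    refine ⟨?_, ?_, ?_⟩
    · rw [Walk.isTrail_def, hw', Walk.edges_append, List.nodup_append]
      refine ⟨hPuvp.isTrail.edges_nodup, ?_, ?_⟩
      · rw [Walk.edges_reverse]
        exact List.nodup_reverse.mpr hC2nd
      · intro e he1 e' he2 hee
        subst hee
        rw [Walk.edges_reverse, List.mem_reverse] at he2
        induction e with
        | h z1 z2 =>
          have hz1P : z1 ∈ Puv.support := mem_support_of_mem_edge he1 (by simp)
          have hz2P : z2 ∈ Puv.support := mem_support_of_mem_edge he1 (by simp)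
          have hz1C : z1 ∈ C2.support := mem_support_of_mem_edge he2 (by simp)
          have hz2C : z2 ∈ C2.support := mem_support_of_mem_edge he2 (by simp)
          have hadj12 : G.Adj z1 z2 := Puv.adj_of_mem_edges he1
          rcases hdisjsupp z1 hz1P hz1C with h1 | h1 <;>
            rcases hdisjsupp z2 hz2P hz2C with h2 | h2 <;> subst h1 <;> subst h2
          · exact G.irrefl hadj12
          · exact hnadjuv hadj12
          · exact hnadjuv hadj12.symm
          · exact G.irrefl hadj12
    · intro hnil
      have : w'.length = 0 := by rw [hnil]; rfl
      omega
    · rw [hw', Walk.tail_support_append, List.nodup_append]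
      have hPnd : Puv.support.Nodup := hPuvp.support_nodup
      have hCnd : C2.reverse.support.Nodup := (hC2.1.reverse).support_nodup
      have hPt : Puv.support = u :: Puv.support.tail := Puv.support_eq_cons
      have hCt : C2.reverse.support = v :: C2.reverse.support.tail :=
        C2.reverse.support_eq_cons
      refine ⟨?_, ?_, ?_⟩
      · rw [hPt] at hPnd
        exact (List.nodup_cons.mp hPnd).2
      · rw [hCt] at hCnd
        exact (List.nodup_cons.mp hCnd).2
      · intro z hz1 z' hz2 hzz
        subst hzz
        have hzu : z ≠ u := by
          rw [hPt] at hPnd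
          intro h
          subst h
          exact (List.nodup_cons.mp hPnd).1 hz1
        have hzv : z ≠ v := by
          rw [hCt] at hCnd
          intro h
          subst h
          exact (List.nodup_cons.mp hCnd).1 hz2
        have hzP : z ∈ Puv.support := by
          rw [hPt]
          exact List.mem_cons_of_mem _ hz1
        have hzC : z ∈ C2.support := by
          have : z ∈ C2.reverse.support := by
            rw [hCt]
            exact List.mem_cons_of_mem _ hz2
          rwa [Walk.support_reverse, List.mem_reverse] at this
        rcases hdisjsupp z hzP hzC with h | h
        · exact hzu h
        · exact hzv h
  have hindw' : ∀ a b : V, a ∈ w'.support → b ∈ w'.support → G.Adj a b →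
      s(a, b) ∈ w'.edges := by
    intro a b haw hbw hadj
    rw [hmemw'] at haw hbw
    rw [hedgew']
    -- reduce to cases
    rcases haw with haP | haC
    · rcases hbw with hbP | hbC
      · exact Or.inl (hPuvInd a b haP hbP hadj)
      · by_cases haC2 : a ∈ C2.support
        · exact Or.inr (edgeC2 a b haC2 hbC hadj)
        · have hau : a ≠ u := fun h => haC2 (h ▸ hsuppPuvInC2)
          have hav : a ≠ v := fun h => haC2 (h ▸ hvC2)
          by_cases hbu : b = u
          · subst hbu
            exact Or.inl (hPuvInd a b haP Puv.start_mem_support hadj)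
          by_cases hbv : b = v
          · subst hbv
            exact Or.inl (hPuvInd a b haP Puv.end_mem_support hadj)
          · exact absurd (star a haP hau hav b hbC hbu hbv (Or.inr hadj)) (fun h => h)
    · rcases hbw with hbP | hbC
      · by_cases hbC2 : b ∈ C2.support
        · exact Or.inr (edgeC2 a b haC hbC2 hadj)
        · have hbu : b ≠ u := fun h => hbC2 (h ▸ hsuppPuvInC2)
          have hbv : b ≠ v := fun h => hbC2 (h ▸ hvC2)
          by_cases hau : a = u
          · subst hau
            exact Or.inl (hPuvInd a b Puv.start_mem_support hbP hadj)
          by_cases hav : a = v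
          · subst hav
            exact Or.inl (hPuvInd a b Puv.end_mem_support hbP hadj)
          · exact absurd (star b hbP hbu hbv a haC hau hav (Or.inr hadj.symm)) (fun h => h)
      · exact Or.inr (edgeC2 a b haC hbC hadj)
  refine ⟨u, w', ⟨⟨hcycw', hindw'⟩, by omega⟩, ?_⟩
  ext z
  simp only [suppSet, Set.mem_union, Set.mem_setOf_eq]
  exact hmemw' z
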